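/- arXiv:math/0208188 — 3 statements merged into one kernel-verified Lean document; each statement's English description precedes it below -/
import Mathlib

section
/- Let G be a finite group acting orthogonally on a finite-dimensional real inner product space X with X^G = 0 (no nonzero fixed vectors). Then for loops x ∈ H¹(T¹, X) that are G-equivariant with respect to a G-action on T¹ through a finite subgroup of O(2) and the given action on X, there exists α > 0 such that ‖x‖_{L²} ≤ α ‖ẋ‖_{L²} for all equivariant loops x. In particular, the mean value of any equivariant loop lies outside any nonzero fixed direction, and a Poincaré-type inequality holds on the space of equivariant loops. -/
/-- Poincaré inequality for symmetric loops: if a finite group `G` acts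
orthogonally on `X` with no nonzero fixed vector, and acts on the time circle
`ℝ/Tℤ` by isometries `t ↦ ε(g) t + c(g)` (through a finite subgroup of
`O(2)`), then there is `α > 0` such that `‖x‖_{L²} ≤ α ‖ẋ‖_{L²}` for every
`G`-equivariant (smooth, `T`-periodic) loop `x`. -/
theorem stmt_13 {G : Type*} [Group G] [Finite G]
    {X : Type*} [NormedAddCommGroup X] [InnerProductSpace ℝ X]
    [FiniteDimensional ℝ X]
    (ρ : G →* (X ≃ₗᵢ[ℝ] X))
    (hfix : ∀ v : X, (∀ g : G, ρ g v = v) → v = 0)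
    (T : ℝ) (hT : 0 < T)
    (ε : G → ℝ) (c : G → ℝ)
    (hε : ∀ g, ε g = 1 ∨ ε g = -1)
    (hone : ε 1 = 1 ∧ c 1 = 0)
    (hmul : ∀ g h : G, ε (g * h) = ε g * ε h ∧
      ∃ k : ℤ, c (g * h) = ε g * c h + c g + k * T) :
    ∃ α > 0, ∀ x : ℝ → X, ContDiff ℝ 1 x → Function.Periodic x T →
      (∀ (g : G) (t : ℝ), x (ε g * t + c g) = ρ g (x t)) →
      ∫ t in (0:ℝ)..T, ‖x t‖ ^ 2 ≤ α ^ 2 * ∫ t in (0:ℝ)..T, ‖deriv x t‖ ^ 2 := by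
  refine ⟨T, hT, ?_⟩
  intro x hx hper hequiv
  have hcx : Continuous x := hx.continuous
  have hdiff : Differentiable ℝ x := hx.differentiable one_ne_zero
  have hcd : Continuous (deriv x) := hx.continuous_deriv le_rfl
  have hxi : ∀ a b : ℝ, IntervalIntegrable x MeasureTheory.volume a b :=
    fun a b => hcx.intervalIntegrable a b
  have hdi : ∀ a b : ℝ, IntervalIntegrable (deriv x) MeasureTheory.volume a b :=
    fun a b => hcd.intervalIntegrable a b
  have hni : IntervalIntegrable (fun t => ‖deriv x t‖) MeasureTheory.volume 0 T :=
    (hcd.norm).intervalIntegrable 0 T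
  set D : ℝ := ∫ t in (0:ℝ)..T, ‖deriv x t‖ with hD
  have hD0 : 0 ≤ D :=
    intervalIntegral.integral_nonneg hT.le (fun u _ => norm_nonneg _)
  -- the mean value is fixed by every group element, hence zero
  have hm : (∫ t in (0:ℝ)..T, x t) = 0 := by
    apply hfix
    intro g
    have h1 : (ρ g) (∫ t in (0:ℝ)..T, x t) = ∫ t in (0:ℝ)..T, (ρ g) (x t) := by
      have := ((ρ g).toLinearIsometry.toContinuousLinearMap).intervalIntegral_comp_comm
        (hxi 0 T)
      simpa using this.symm
    rw [h1]
    have h2 : ∀ t : ℝ, (ρ g) (x t) = x (ε g * t + c g) := fun t => (hequiv g t).symm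
    simp_rw [h2]
    rcases hε g with h | h
    · simp only [h, one_mul]
      rw [intervalIntegral.integral_comp_add_right]
      have := hper.intervalIntegral_add_eq (c g) 0
      simpa [add_comm] using this
    · have h3 : ∀ t : ℝ, ε g * t + c g = c g - t := by intro t; rw [h]; ring
      simp_rw [h3]
      rw [intervalIntegral.integral_comp_sub_left]
      have := hper.intervalIntegral_add_eq (c g - T) 0
      simpa [sub_add_cancel] using this
  -- bound on differences of values
  have hdiffb : ∀ s t : ℝ, s ∈ Set.Icc (0:ℝ) T → t ∈ Set.Icc (0:ℝ) T →
      ‖x t - x s‖ ≤ D := by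
    have key : ∀ s t : ℝ, 0 ≤ s → s ≤ t → t ≤ T → ‖x t - x s‖ ≤ D := by
      intro s t h0 hst htT
      have hftc : ∫ u in s..t, deriv x u = x t - x s :=
        intervalIntegral.integral_deriv_eq_sub (fun u _ => hdiff u) (hdi s t)
      rw [← hftc]
      calc ‖∫ u in s..t, deriv x u‖ ≤ ∫ u in s..t, ‖deriv x u‖ :=
            intervalIntegral.norm_integral_le_integral_norm hst
        _ ≤ D := intervalIntegral.integral_mono_interval h0 hst htT
            (Filter.Eventually.of_forall fun u => norm_nonneg _) hni
    intro s t hs ht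
    rcases le_total s t with h | h
    · exact key s t hs.1 h ht.2
    · rw [norm_sub_rev]; exact key t s ht.1 h hs.2
  -- pointwise bound
  have hpt : ∀ t ∈ Set.Icc (0:ℝ) T, ‖x t‖ ≤ D := by
    intro t ht
    have h1 : (T:ℝ) • x t = ∫ s in (0:ℝ)..T, (x t - x s) := by
      rw [intervalIntegral.integral_sub (intervalIntegrable_const) (hxi 0 T), hm,
        intervalIntegral.integral_const, sub_zero, sub_zero]
    have h2 : ‖∫ s in (0:ℝ)..T, (x t - x s)‖ ≤ T * D := by
      calc ‖∫ s in (0:ℝ)..T, (x t - x s)‖ ≤ ∫ s in (0:ℝ)..T, ‖x t - x s‖ :=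
            intervalIntegral.norm_integral_le_integral_norm hT.le
        _ ≤ ∫ s in (0:ℝ)..T, D := by
            apply intervalIntegral.integral_mono_on hT.le
              (((continuous_const.sub hcx).norm).intervalIntegrable 0 T)
              intervalIntegrable_const
              (fun s hs => hdiffb s t hs ht)
        _ = T * D := by rw [intervalIntegral.integral_const]; simp [smul_eq_mul]
    rw [← h1, norm_smul, Real.norm_eq_abs, abs_of_pos hT] at h2
    exact le_of_mul_le_mul_left h2 hT
  -- integrate the pointwise bound
  have hsq : (∫ t in (0:ℝ)..T, ‖x t‖ ^ 2) ≤ T * D ^ 2 := by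
    calc ∫ t in (0:ℝ)..T, ‖x t‖ ^ 2 ≤ ∫ t in (0:ℝ)..T, D ^ 2 := by
          apply intervalIntegral.integral_mono_on hT.le
            ((hcx.norm.pow 2).intervalIntegrable 0 T) intervalIntegrable_const
          intro t ht
          exact pow_le_pow_left₀ (norm_nonneg _) (hpt t ht) 2
      _ = T * D ^ 2 := by rw [intervalIntegral.integral_const]; simp [smul_eq_mul]
  -- Cauchy–Schwarz : D ^ 2 ≤ T * ∫ ‖ẋ‖²
  set I : ℝ := ∫ t in (0:ℝ)..T, ‖deriv x t‖ ^ 2 with hI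
  have hCS : D ^ 2 ≤ T * I := by
    have hInn : (0:ℝ) ≤ ∫ t in (0:ℝ)..T, (‖deriv x t‖ - D / T) ^ 2 :=
      intervalIntegral.integral_nonneg hT.le (fun u _ => sq_nonneg _)
    have hexp : (∫ t in (0:ℝ)..T, (‖deriv x t‖ - D / T) ^ 2)
        = I - 2 * (D / T) * D + (D / T) ^ 2 * T := by
      have h1 : ∀ t : ℝ, (‖deriv x t‖ - D / T) ^ 2
          = (‖deriv x t‖ ^ 2 - 2 * (D / T) * ‖deriv x t‖) + (D / T) ^ 2 := fun t => by ring
      simp_rw [h1]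
      rw [intervalIntegral.integral_add (f := fun t => ‖deriv x t‖ ^ 2 - 2 * (D / T) * ‖deriv x t‖)
            (g := fun _ => (D / T) ^ 2)
            (((hcd.norm.pow 2).intervalIntegrable 0 T).sub
              (((hcd.norm).intervalIntegrable 0 T).const_mul _))
            intervalIntegrable_const,
          intervalIntegral.integral_sub (f := fun t => ‖deriv x t‖ ^ 2) ((hcd.norm.pow 2).intervalIntegrable 0 T)
            (((hcd.norm).intervalIntegrable 0 T).const_mul _),
          intervalIntegral.integral_const_mul, intervalIntegral.integral_const]
      simp [smul_eq_mul, ← hD, ← hI]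
      ring
    rw [hexp] at hInn
    have hT' : T ≠ 0 := hT.ne'
    have e : 2 * (D / T) * D - (D / T) ^ 2 * T = D ^ 2 / T := by
      field_simp; ring
    have h4 : D ^ 2 / T ≤ I := by nlinarith [hInn]
    calc D ^ 2 = T * (D ^ 2 / T) := by field_simp
      _ ≤ T * I := by exact mul_le_mul_of_nonneg_left h4 hT.le
  calc ∫ t in (0:ℝ)..T, ‖x t‖ ^ 2 ≤ T * D ^ 2 := hsq
    _ ≤ T * (T * I) := mul_le_mul_of_nonneg_left hCS hT.le
    _ = T ^ 2 * I := by ring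
end

section
/- (Palais principle of symmetric criticality, finite-group Hilbert space version) Let G be a finite group acting by linear isometries on a Hilbert space Λ and let 𝒜: Λ → ℝ be a G-invariant C¹ functional. Then every critical point of the restriction of 𝒜 to the fixed subspace Λ^G is a critical point of 𝒜 on Λ. -/
/-- Palais principle of symmetric criticality (finite group, Hilbert space
version): if a finite group `G` acts by linear isometries on a Hilbert space
`Λ` and `𝒜 : Λ → ℝ` is a `G`-invariant `C¹` functional, then any point of the
fixed subspace `Λ^G` at which the differential of `𝒜` vanishes on `Λ^G` is a
critical point of `𝒜` on all of `Λ`. -/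
theorem stmt_15 {G : Type*} [Group G] [Finite G]
    {Λ : Type*} [NormedAddCommGroup Λ] [InnerProductSpace ℝ Λ]
    [CompleteSpace Λ]
    (ρ : G →* (Λ ≃ₗᵢ[ℝ] Λ))
    (𝒜 : Λ → ℝ) (h𝒜 : ContDiff ℝ 1 𝒜)
    (hinv : ∀ (g : G) (x : Λ), 𝒜 (ρ g x) = 𝒜 x)
    (x₀ : Λ) (hx₀ : ∀ g : G, ρ g x₀ = x₀)
    (hcrit : ∀ v : Λ, (∀ g : G, ρ g v = v) → fderiv ℝ 𝒜 x₀ v = 0) :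
    fderiv ℝ 𝒜 x₀ = 0 := by
  cases nonempty_fintype G
  set f := fderiv ℝ 𝒜 x₀ with hf
  have hdiff : ∀ y, DifferentiableAt ℝ 𝒜 y := fun y =>
    (h𝒜.differentiable one_ne_zero).differentiableAt
  -- Step 1: f (ρ g v) = f v
  have hequiv : ∀ g v, f (ρ g v) = f v := by
    intro g v
    have hcomp : 𝒜 ∘ (ρ g) = 𝒜 := funext fun x => hinv g x
    have h1 : fderiv ℝ (𝒜 ∘ (ρ g)) x₀
        = (fderiv ℝ 𝒜 (ρ g x₀)).comp (fderiv ℝ (⇑(ρ g)) x₀) :=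
      fderiv_comp x₀ (hdiff _) (ρ g).differentiableAt
    rw [hcomp, hx₀ g, (ρ g).fderiv] at h1
    have := congrArg (fun L : Λ →L[ℝ] ℝ => L v) h1
    simpa using this.symm
  -- Step 2: average
  ext v
  have key : f v = 0 := by
    set w : Λ := (Fintype.card G : ℝ)⁻¹ • ∑ g : G, ρ g v with hw
    have hcard : (Fintype.card G : ℝ) ≠ 0 := by
      exact_mod_cast Fintype.card_ne_zero
    have hwfix : ∀ h : G, ρ h w = w := by
      intro h
      rw [hw, map_smul, map_sum]
      congr 1
      have : ∀ g : G, ρ h (ρ g v) = ρ (h * g) v := by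
        intro g; rw [map_mul]; rfl
      simp_rw [this]
      exact Fintype.sum_equiv (Equiv.mulLeft h) _ _ (fun g => rfl)
    have hfw : f w = 0 := hcrit w hwfix
    have : f w = f v := by
      rw [hw, map_smul, map_sum]
      simp_rw [hequiv]
      rw [Finset.sum_const, Finset.card_univ, smul_eq_mul, nsmul_eq_mul]
      field_simp
    rw [this] at hfw
    exact hfw
  simpa using key
end

section
/- Let D ⊆ ℝ² be the set of pairs (m, θ) with m > 0 and 0 < θ < π/2 such that inf{F(m, θ, l, r₀, c) : l > r₀ > 0, l > c > 0} < 0, where F is as defined in the previous statement. Then D is open and non-empty. -/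
open Real

/-- The difference between the action of the symmetric test path and the
action of the Euler solution, as a function of the parameters
`(m, θ, l, r₀, c)`. -/
noncomputable def actionDifference (m θ l r₀ c : ℝ) : ℝ :=
  l ^ 2 * θ ^ 2 * (1 + 2 / m) + c ^ 2
    + (1 / 12) * (3 * r₀ ^ 2 + c ^ 2 + 3 * c * r₀) * (π - 2 * θ) ^ 2
    + m ^ 2 / (m * (l - r₀) + 2 * l)
    + m / Real.sqrt ((r₀ + c) ^ 2 + l ^ 2 * (1 + 2 / m) ^ 2)
    + (1 / (2 * c)) * Real.log (1 + c / r₀)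
    - (3 / 2) * ((1 / 2 + 2 * m) ^ 2 * (π / 2 - θ)) ^ ((1 : ℝ) / 3)

/-- The set `D` of parameters `(m, θ)` for which the infimum of the action
difference over the admissible `(l, r₀, c)` is negative. -/
noncomputable def paramSet : Set (ℝ × ℝ) :=
  {p | 0 < p.1 ∧ 0 < p.2 ∧ p.2 < π / 2 ∧
    ∃ l r₀ c : ℝ, l > r₀ ∧ r₀ > 0 ∧ l > c ∧ c > 0 ∧
      actionDifference p.1 p.2 l r₀ c < 0}

lemma actionDifference_contOn (l r₀ c : ℝ) (hlr : l > r₀) (hr : r₀ > 0) (hc : c > 0) :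
    ContinuousOn (fun p : ℝ × ℝ => actionDifference p.1 p.2 l r₀ c)
      {p : ℝ × ℝ | 0 < p.1} := by
  unfold actionDifference
  have h1 : ContinuousOn (fun p : ℝ × ℝ => (1 : ℝ) + 2 / p.1) {p : ℝ × ℝ | 0 < p.1} :=
    continuousOn_const.add (continuousOn_const.div continuous_fst.continuousOn
      (fun p hp => ne_of_gt hp))
  apply ContinuousOn.sub
  · apply ContinuousOn.add
    apply ContinuousOn.add
    apply ContinuousOn.add
    apply ContinuousOn.add
    apply ContinuousOn.add
    · exact (continuousOn_const.mul ((continuous_snd.pow 2).continuousOn)).mul h1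
    · exact continuousOn_const
    · exact (continuousOn_const.mul continuousOn_const).mul
        (((continuousOn_const.sub (continuousOn_const.mul continuous_snd.continuousOn))).pow 2)
    · apply ContinuousOn.div ((continuous_fst.pow 2).continuousOn)
        ((continuous_fst.continuousOn.mul continuousOn_const).add continuousOn_const)
      intro p hp
      have : (0:ℝ) < p.1 * (l - r₀) + 2 * l := by
        have := hp.out
        nlinarith
      exact ne_of_gt this
    · apply ContinuousOn.div continuous_fst.continuousOn
      · exact (continuousOn_const.add (continuousOn_const.mul (h1.pow 2))).sqrt
      · intro p hp
        have harg : (0:ℝ) < (r₀ + c) ^ 2 + l ^ 2 * (1 + 2 / p.1) ^ 2 := by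
          have h2 : (0:ℝ) < (r₀ + c)^2 := by positivity
          nlinarith [sq_nonneg (l * (1 + 2 / p.1))]
        positivity
    · exact continuousOn_const
  · apply continuousOn_const.mul
    apply ContinuousOn.rpow_const
    · exact (((continuousOn_const.add (continuousOn_const.mul continuous_fst.continuousOn))).pow 2).mul
        (continuousOn_const.sub continuous_snd.continuousOn)
    · intro p _; right; norm_num

lemma paramSet_isOpen : IsOpen paramSet := by
  have : paramSet = ⋃ (l : ℝ), ⋃ (r₀ : ℝ), ⋃ (c : ℝ),
      ⋃ (_ : l > r₀ ∧ r₀ > 0 ∧ l > c ∧ c > 0),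
      {p : ℝ × ℝ | (0 < p.1 ∧ 0 < p.2 ∧ p.2 < π / 2) ∧
        actionDifference p.1 p.2 l r₀ c < 0} := by
    ext p
    simp only [paramSet, Set.mem_setOf_eq, Set.mem_iUnion]
    constructor
    · rintro ⟨h1, h2, h3, l, r₀, c, hl, hr, hc, hc', hF⟩
      exact ⟨l, r₀, c, ⟨hl, hr, hc, hc'⟩, ⟨h1, h2, h3⟩, hF⟩
    · rintro ⟨l, r₀, c, ⟨hl, hr, hc, hc'⟩, ⟨h1, h2, h3⟩, hF⟩
      exact ⟨h1, h2, h3, l, r₀, c, hl, hr, hc, hc', hF⟩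
  rw [this]
  apply isOpen_iUnion; intro l
  apply isOpen_iUnion; intro r₀
  apply isOpen_iUnion; intro c
  apply isOpen_iUnion; rintro ⟨hl, hr, hc, hc'⟩
  have hU : IsOpen {p : ℝ × ℝ | 0 < p.1 ∧ 0 < p.2 ∧ p.2 < π / 2} := by
    apply IsOpen.inter (isOpen_lt continuous_const continuous_fst)
    exact (isOpen_lt continuous_const continuous_snd).inter
      (isOpen_lt continuous_snd continuous_const)
  have key : IsOpen ({p : ℝ × ℝ | 0 < p.1 ∧ 0 < p.2 ∧ p.2 < π / 2} ∩
      (fun p : ℝ × ℝ => actionDifference p.1 p.2 l r₀ c) ⁻¹' Set.Iio 0) := by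
    apply ContinuousOn.isOpen_inter_preimage ?_ hU isOpen_Iio
    exact (actionDifference_contOn l r₀ c hl hr hc').mono (fun p hp => hp.1)
  convert key using 1
  rfl

lemma actionDifference_witness : actionDifference 2 (π/8) 1 0.4 0.3 < 0 := by
  unfold actionDifference
  have hpi1 : π < 3.15 := pi_lt_d2
  have hpi2 : 3.141592 < π := pi_gt_d6
  have hs : (2.11:ℝ) ≤ Real.sqrt ((0.4 + 0.3) ^ 2 + 1 ^ 2 * (1 + 2 / 2) ^ 2) := by
    rw [show ((0.4 + 0.3) ^ 2 + 1 ^ 2 * (1 + 2 / 2) ^ 2 : ℝ) = 4.49 by norm_num]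
    rw [show (2.11:ℝ) = Real.sqrt (2.11^2) from (Real.sqrt_sq (by norm_num)).symm]
    exact Real.sqrt_le_sqrt (by norm_num)
  have hsdiv : (2:ℝ) / Real.sqrt ((0.4 + 0.3) ^ 2 + 1 ^ 2 * (1 + 2 / 2) ^ 2) ≤ 2 / 2.11 :=
    div_le_div_of_nonneg_left (by norm_num) (by norm_num) hs
  have hlog : Real.log (1 + 0.3 / 0.4) ≤ 0.66 := by
    have h175 : (1 + 0.3 / 0.4 : ℝ) = 1.75 := by norm_num
    rw [h175, show (1.75:ℝ) = Real.sqrt 1.75 ^ 2 by rw [Real.sq_sqrt]; norm_num,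
      Real.log_pow]
    have h1 : Real.sqrt 1.75 ≤ 1.33 := by
      rw [show (1.33:ℝ) = Real.sqrt (1.33^2) from (Real.sqrt_sq (by norm_num)).symm]
      exact Real.sqrt_le_sqrt (by norm_num)
    have h2 : Real.log (Real.sqrt 1.75) ≤ Real.sqrt 1.75 - 1 :=
      Real.log_le_sub_one_of_pos (Real.sqrt_pos.mpr (by norm_num))
    push_cast
    nlinarith
  have hrpow : (2.87:ℝ) ≤ ((1 / 2 + 2 * 2) ^ 2 * (π / 2 - π/8)) ^ ((1:ℝ)/3) := by
    have he : ((2.87:ℝ)^(3:ℕ)) ^ ((1:ℝ)/3) = 2.87 := by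
      rw [← Real.rpow_natCast (2.87:ℝ) 3, ← Real.rpow_mul (by norm_num)]
      norm_num
    rw [← he]
    apply Real.rpow_le_rpow (by positivity) ?_ (by norm_num)
    nlinarith
  nlinarith [hsdiv, hlog, hrpow, sq_nonneg π]

/-- The set `D` is open and non-empty. -/
theorem stmt_19 : IsOpen paramSet ∧ paramSet.Nonempty := by
  refine ⟨paramSet_isOpen, ⟨(2, π/8), ?_⟩⟩
  refine ⟨by norm_num, by positivity, ?_, 1, 0.4, 0.3, by norm_num, by norm_num,
    by norm_num, by norm_num, actionDifference_witness⟩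
  have := pi_pos
  simp only
  linarith
end
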